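/- Let f ∈ K(z) be a rational function of degree d > 1 and let F be a non-degenerate homogeneous lift of f. Then the sequence of functions Z ↦ d^{-n}·(log‖F^n(Z)‖ − d^n·log‖Z‖), n ∈ ℕ, converges uniformly on K^2 \ {(0,0)} as n → ∞ (the limit is the dynamical Green function of F), where F^n denotes the n-fold composition of F. -/

import Mathlib

open scoped Classical

open Polynomial Filter MeasureTheory Topology
set_option maxHeartbeats 1000000

variable (K : Type*) [NontriviallyNormedField K] [IsAlgClosed K] [CompleteSpace K]
  [IsUltrametricDist K]

/-- The degree of a rational function: max of degrees of numerator and denominator. -/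
noncomputable def rdeg (h : RatFunc K) : ℕ := max h.num.natDegree h.denom.natDegree

/-- Canonical homogeneous coordinates of a point of `P^1(K) = K ∪ {∞}`. -/
noncomputable def homCoord : OnePoint K → K × K :=
  OnePoint.rec (1, 0) (fun a => (a, 1))

/-- The (normalized) chordal metric on `P^1(K)`:
`[z,w] = |z0*w1 - z1*w0| / (max(|z0|,|z1|) * max(|w0|,|w1|))`. -/
noncomputable def chordal (x y : OnePoint K) : ℝ :=
  ‖(homCoord K x).1 * (homCoord K y).2 - (homCoord K x).2 * (homCoord K y).1‖ /
    (max ‖(homCoord K x).1‖ ‖(homCoord K x).2‖ * max ‖(homCoord K y).1‖ ‖(homCoord K y).2‖)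

/-- The action of a rational function on the projective line `P^1(K) = K ∪ {∞}`. -/
noncomputable def evalP1 (h : RatFunc K) : OnePoint K → OnePoint K :=
  OnePoint.rec
    (if h.denom.natDegree < h.num.natDegree then OnePoint.infty
      else ((h.num.coeff h.denom.natDegree / h.denom.leadingCoeff : K) : OnePoint K))
    (fun a => if h.denom.eval a = 0 then OnePoint.infty
      else ((h.num.eval a / h.denom.eval a : K) : OnePoint K))

/-- Composition of rational functions. -/
noncomputable def rcomp (f g : RatFunc K) : RatFunc K :=
  RatFunc.eval (algebraMap K (RatFunc K)) g f

/-- Iterates of a rational function, as rational functions. -/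
noncomputable def riter (f : RatFunc K) : ℕ → RatFunc K
  | 0 => RatFunc.X
  | n + 1 => rcomp K f (riter f n)

/-- Evaluation of a two-variable polynomial at a point of `K²`. -/
noncomputable def pairEval (H : MvPolynomial (Fin 2) K) (Z : K × K) : K :=
  MvPolynomial.eval (fun i : Fin 2 => if i = 0 then Z.1 else Z.2) H

/-- The canonical projection `π : K² \ {0} → P^1(K)` (junk value `∞` at the origin). -/
noncomputable def projPt (Z : K × K) : OnePoint K :=
  if Z.2 = 0 then OnePoint.infty else ((Z.1 / Z.2 : K) : OnePoint K)

/-- `H = (H₀, H₁)` is a non-degenerate homogeneous lift of the rational function `h` of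
degree `e`: both coordinates are homogeneous of degree `e`, their only common zero in `K²`
is the origin, and `π ∘ H = h ∘ π` on `K² \ {0}`. -/
def IsLift (h : RatFunc K) (e : ℕ) (H : MvPolynomial (Fin 2) K × MvPolynomial (Fin 2) K) :
    Prop :=
  H.1.IsHomogeneous e ∧ H.2.IsHomogeneous e ∧
    (∀ Z : K × K, pairEval K H.1 Z = 0 → pairEval K H.2 Z = 0 → Z = 0) ∧
    ∀ Z : K × K, Z ≠ 0 →
      projPt K (pairEval K H.1 Z, pairEval K H.2 Z) = evalP1 K h (projPt K Z)

/-- The self-map of `K²` induced by a pair of two-variable polynomials. -/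
noncomputable def liftMap (H : MvPolynomial (Fin 2) K × MvPolynomial (Fin 2) K)
    (Z : K × K) : K × K :=
  (pairEval K H.1 Z, pairEval K H.2 Z)

/-- Composition of pairs of two-variable polynomials (substitution). -/
noncomputable def pairComp (H G : MvPolynomial (Fin 2) K × MvPolynomial (Fin 2) K) :
    MvPolynomial (Fin 2) K × MvPolynomial (Fin 2) K :=
  ((MvPolynomial.aeval (fun i : Fin 2 => if i = 0 then G.1 else G.2)) H.1,
   (MvPolynomial.aeval (fun i : Fin 2 => if i = 0 then G.1 else G.2)) H.2)

/-- The `n`-fold composition of a pair of two-variable polynomials with itself. -/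
noncomputable def pairPow (H : MvPolynomial (Fin 2) K × MvPolynomial (Fin 2) K) :
    ℕ → MvPolynomial (Fin 2) K × MvPolynomial (Fin 2) K
  | 0 => (MvPolynomial.X 0, MvPolynomial.X 1)
  | n + 1 => pairComp K H (pairPow H n)

/-- The linear form in `K[z₀, z₁]` vanishing exactly at a given point of `P^1(K)`:
`z₀ - a z₁` for `a ∈ K`, and `z₁` for `∞`. -/
noncomputable def linForm : OnePoint K → MvPolynomial (Fin 2) K :=
  OnePoint.rec (MvPolynomial.X 1)
    (fun a => MvPolynomial.X 0 - MvPolynomial.C a * MvPolynomial.X 1)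


section GreenAux

open MvPolynomial

variable {K}

lemma nrm_pos {Z : K × K} (hZ : Z ≠ 0) : 0 < max ‖Z.1‖ ‖Z.2‖ := by
  rcases eq_or_ne Z.1 0 with h1 | h1
  · have h2 : Z.2 ≠ 0 := by
      intro h2; exact hZ (Prod.ext h1 h2)
    exact lt_max_of_lt_right (norm_pos_iff.mpr h2)
  · exact lt_max_of_lt_left (norm_pos_iff.mpr h1)

lemma eval_homog_smul (P : MvPolynomial (Fin 2) K) {e : ℕ} (hP : P.IsHomogeneous e) (c : K)
    (x : Fin 2 → K) : MvPolynomial.eval (fun i => c * x i) P = c ^ e * MvPolynomial.eval x P := by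
  rw [MvPolynomial.eval_eq', MvPolynomial.eval_eq', Finset.mul_sum]
  apply Finset.sum_congr rfl
  intro d hd
  have hdeg : d.degree = e := by
    have := hP (MvPolynomial.mem_support_iff.mp hd)
    rw [Finsupp.degree_eq_weight_one]; exact this
  have : ∏ i, (c * x i) ^ d i = c ^ e * ∏ i, x i ^ d i := by
    simp_rw [mul_pow, Finset.prod_mul_distrib, Finset.prod_pow_eq_pow_sum]
    congr 1
    rw [← hdeg, Finsupp.degree_apply]
    exact congrArg (c ^ ·) (Finset.sum_subset (Finset.subset_univ _)
      (fun i _ h => Finsupp.notMem_support_iff.mp h) :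
      (∑ i ∈ d.support, d i) = ∑ i, d i).symm
  rw [this]; ring

lemma pairEval_smul (P : MvPolynomial (Fin 2) K) {e : ℕ} (hP : P.IsHomogeneous e) (c : K)
    (Z : K × K) : pairEval K P (c * Z.1, c * Z.2) = c ^ e * pairEval K P Z := by
  have h : (fun i : Fin 2 => if i = 0 then c * Z.1 else c * Z.2)
      = fun i => c * (if i = 0 then Z.1 else Z.2) := by
    funext i; split <;> rfl
  show MvPolynomial.eval _ P = _
  rw [show (fun i : Fin 2 => if i = 0 then (c * Z.1, c * Z.2).1 else (c * Z.1, c * Z.2).2)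
    = fun i => c * (if i = 0 then Z.1 else Z.2) from h, eval_homog_smul P hP c]
  rfl

lemma pairEval_le (P : MvPolynomial (Fin 2) K) (Z : K × K) (h1 : ‖Z.1‖ ≤ 1) (h2 : ‖Z.2‖ ≤ 1) :
    ‖pairEval K P Z‖ ≤ ∑ d ∈ P.support, ‖P.coeff d‖ := by
  show ‖MvPolynomial.eval _ P‖ ≤ _
  rw [MvPolynomial.eval_eq']
  refine (norm_sum_le _ _).trans (Finset.sum_le_sum fun d hd => ?_)
  rw [norm_mul]
  have hle : ‖∏ i, (if i = (0 : Fin 2) then Z.1 else Z.2) ^ d i‖ ≤ 1 := by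
    rw [norm_prod]
    refine Finset.prod_le_one (fun i _ => norm_nonneg _) (fun i _ => ?_)
    rw [norm_pow]
    refine pow_le_one₀ (norm_nonneg _) ?_
    split <;> assumption
  calc ‖P.coeff d‖ * ‖∏ i, (if i = (0 : Fin 2) then Z.1 else Z.2) ^ d i‖
      ≤ ‖P.coeff d‖ * 1 := by
        exact mul_le_mul_of_nonneg_left hle (norm_nonneg _)
    _ = ‖P.coeff d‖ := mul_one _

lemma exists_pow_mem (F : MvPolynomial (Fin 2) K × MvPolynomial (Fin 2) K)
    (hns : ∀ Z : K × K, pairEval K F.1 Z = 0 → pairEval K F.2 Z = 0 → Z = 0) (i : Fin 2) :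
    ∃ m : ℕ, (X i : MvPolynomial (Fin 2) K) ^ m ∈ Ideal.span {F.1, F.2} := by
  have hzl : MvPolynomial.zeroLocus K (Ideal.span {F.1, F.2}) ⊆ {(0 : Fin 2 → K)} := by
    intro x hx
    have h1 : MvPolynomial.eval x F.1 = 0 := hx F.1 (Ideal.subset_span (by simp))
    have h2 : MvPolynomial.eval x F.2 = 0 := hx F.2 (Ideal.subset_span (by simp))
    have hfun : (fun j : Fin 2 => if j = 0 then x 0 else x 1) = x := by
      funext j; fin_cases j <;> simp
    have hz : ((x 0, x 1) : K × K) = 0 := by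
      apply hns
      · show MvPolynomial.eval _ F.1 = 0
        simpa [hfun] using h1
      · show MvPolynomial.eval _ F.2 = 0
        simpa [hfun] using h2
    have h0 : x 0 = 0 := congrArg Prod.fst hz
    have h1' : x 1 = 0 := congrArg Prod.snd hz
    simp only [Set.mem_singleton_iff]
    funext j; fin_cases j <;> assumption
  have hX : (X i : MvPolynomial (Fin 2) K) ∈
      MvPolynomial.vanishingIdeal K (MvPolynomial.zeroLocus K (Ideal.span {F.1, F.2})) := by
    rw [MvPolynomial.mem_vanishingIdeal_iff]
    intro x hx
    have : x = 0 := hzl hx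
    simp [this]
  rw [MvPolynomial.vanishingIdeal_zeroLocus_eq_radical] at hX
  exact hX

lemma liftMap_ne_zero {F : MvPolynomial (Fin 2) K × MvPolynomial (Fin 2) K}
    (hns : ∀ Z : K × K, pairEval K F.1 Z = 0 → pairEval K F.2 Z = 0 → Z = 0)
    {Z : K × K} (hZ : Z ≠ 0) : liftMap K F Z ≠ 0 := by
  intro h
  exact hZ (hns Z (congrArg Prod.fst h) (congrArg Prod.snd h))

lemma iter_ne_zero {F : MvPolynomial (Fin 2) K × MvPolynomial (Fin 2) K}
    (hns : ∀ Z : K × K, pairEval K F.1 Z = 0 → pairEval K F.2 Z = 0 → Z = 0)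
    {Z : K × K} (hZ : Z ≠ 0) (n : ℕ) : (liftMap K F)^[n] Z ≠ 0 := by
  induction n with
  | zero => exact hZ
  | succ n ih =>
    rw [Function.iterate_succ_apply']
    exact liftMap_ne_zero hns ih

lemma green_bound (F : MvPolynomial (Fin 2) K × MvPolynomial (Fin 2) K) (d : ℕ)
    (h1 : F.1.IsHomogeneous d) (h2 : F.2.IsHomogeneous d)
    (hns : ∀ Z : K × K, pairEval K F.1 Z = 0 → pairEval K F.2 Z = 0 → Z = 0) :
    ∃ M : ℝ, ∀ Z : K × K, Z ≠ 0 →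
      |Real.log (max ‖(liftMap K F Z).1‖ ‖(liftMap K F Z).2‖)
        - (d : ℝ) * Real.log (max ‖Z.1‖ ‖Z.2‖)| ≤ M := by
  obtain ⟨m0, hm0⟩ := exists_pow_mem F hns 0
  obtain ⟨m1, hm1⟩ := exists_pow_mem F hns 1
  obtain ⟨a0, b0, hab0⟩ := Ideal.mem_span_pair.mp hm0
  obtain ⟨a1, b1, hab1⟩ := Ideal.mem_span_pair.mp hm1
  obtain ⟨c, hc⟩ := NormedField.exists_one_lt_norm K
  have hc0 : c ≠ 0 := by
    intro h; rw [h, norm_zero] at hc; linarith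
  set β : ℝ := ‖c‖ with hβ
  have hβ0 : (0 : ℝ) < β := lt_trans one_pos hc
  set r : ℝ := β⁻¹ with hrdef
  have hr0 : 0 < r := inv_pos.mpr hβ0
  have hr1 : r < 1 := inv_lt_one_of_one_lt₀ hc
  set CF : ℝ := max (∑ t ∈ F.1.support, ‖F.1.coeff t‖) (∑ t ∈ F.2.support, ‖F.2.coeff t‖) + 1
    with hCF
  have hCF0 : 0 < CF := by
    have h0 : (0:ℝ) ≤ ∑ t ∈ F.1.support, ‖F.1.coeff t‖ :=
      Finset.sum_nonneg fun _ _ => norm_nonneg _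
    have h2' : (0:ℝ) ≤ max (∑ t ∈ F.1.support, ‖F.1.coeff t‖)
        (∑ t ∈ F.2.support, ‖F.2.coeff t‖) := le_trans h0 (le_max_left _ _)
    linarith
  set D0 : ℝ := (∑ t ∈ a0.support, ‖a0.coeff t‖) + (∑ t ∈ b0.support, ‖b0.coeff t‖) + 1
    with hD0
  set D1 : ℝ := (∑ t ∈ a1.support, ‖a1.coeff t‖) + (∑ t ∈ b1.support, ‖b1.coeff t‖) + 1
    with hD1
  have hD00 : 0 < D0 := by
    have ha : (0:ℝ) ≤ ∑ t ∈ a0.support, ‖a0.coeff t‖ :=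
      Finset.sum_nonneg fun _ _ => norm_nonneg _
    have hb : (0:ℝ) ≤ ∑ t ∈ b0.support, ‖b0.coeff t‖ :=
      Finset.sum_nonneg fun _ _ => norm_nonneg _
    linarith
  have hD10 : 0 < D1 := by
    have ha : (0:ℝ) ≤ ∑ t ∈ a1.support, ‖a1.coeff t‖ :=
      Finset.sum_nonneg fun _ _ => norm_nonneg _
    have hb : (0:ℝ) ≤ ∑ t ∈ b1.support, ‖b1.coeff t‖ :=
      Finset.sum_nonneg fun _ _ => norm_nonneg _
    linarith
  set ε : ℝ := min (r ^ m0 / D0) (r ^ m1 / D1) with hε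
  have hε0 : 0 < ε :=
    lt_min (div_pos (pow_pos hr0 _) hD00) (div_pos (pow_pos hr0 _) hD10)
  refine ⟨max (Real.log CF - (d : ℝ) * Real.log r) (-Real.log ε), ?_⟩
  intro Z hZ
  set t : ℝ := max ‖Z.1‖ ‖Z.2‖ with ht
  have ht0 : 0 < t := nrm_pos hZ
  obtain ⟨n, hn1, hn2⟩ := exists_mem_Ico_zpow ht0 hc
  set s : K := c ^ (-(n + 1)) with hs
  have hs0 : s ≠ 0 := zpow_ne_zero _ hc0
  have hsnorm : ‖s‖ = β ^ (-(n + 1) : ℤ) := by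
    rw [hs, norm_zpow]
  set W : K × K := (s * Z.1, s * Z.2) with hW
  have hW0 : W ≠ 0 := by
    intro h
    apply hZ
    have e1 : s * Z.1 = 0 := congrArg Prod.fst h
    have e2 : s * Z.2 = 0 := congrArg Prod.snd h
    exact Prod.ext (by
      have := mul_eq_zero.mp e1
      tauto) (by
      have := mul_eq_zero.mp e2
      tauto)
  have hNW : max ‖W.1‖ ‖W.2‖ = ‖s‖ * t := by
    show max ‖s * Z.1‖ ‖s * Z.2‖ = ‖s‖ * t
    rw [norm_mul, norm_mul, ht, mul_max_of_nonneg _ _ (norm_nonneg s)]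
  have hβne : β ≠ 0 := ne_of_gt hβ0
  have hWlow : r ≤ max ‖W.1‖ ‖W.2‖ := by
    rw [hNW, hsnorm]
    have hmul : β ^ (-(n + 1) : ℤ) * β ^ n ≤ β ^ (-(n + 1) : ℤ) * t :=
      mul_le_mul_of_nonneg_left hn1 (le_of_lt (zpow_pos hβ0 _))
    calc r = β ^ (-1 : ℤ) := by rw [hrdef, zpow_neg_one]
      _ = β ^ (-(n + 1) + n : ℤ) := congrArg (β ^ ·) (by ring)
      _ = β ^ (-(n + 1) : ℤ) * β ^ n := zpow_add₀ hβne _ _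
      _ ≤ β ^ (-(n + 1) : ℤ) * t := hmul
  have hWhigh : max ‖W.1‖ ‖W.2‖ ≤ 1 := by
    rw [hNW, hsnorm]
    have hmul : β ^ (-(n + 1) : ℤ) * t ≤ β ^ (-(n + 1) : ℤ) * β ^ (n + 1) :=
      mul_le_mul_of_nonneg_left (le_of_lt hn2) (le_of_lt (zpow_pos hβ0 _))
    calc β ^ (-(n + 1) : ℤ) * t ≤ β ^ (-(n + 1) : ℤ) * β ^ (n + 1) := hmul
      _ = β ^ (-(n + 1) + (n + 1) : ℤ) := (zpow_add₀ hβne _ _).symm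
      _ = β ^ (0 : ℤ) := congrArg (β ^ ·) (by ring)
      _ = 1 := zpow_zero β
  -- invariance: the quantity at Z equals the quantity at W
  have hFW1 : (liftMap K F W).1 = s ^ d * (liftMap K F Z).1 := pairEval_smul F.1 h1 s Z
  have hFW2 : (liftMap K F W).2 = s ^ d * (liftMap K F Z).2 := pairEval_smul F.2 h2 s Z
  have hNFW : max ‖(liftMap K F W).1‖ ‖(liftMap K F W).2‖
      = ‖s‖ ^ d * max ‖(liftMap K F Z).1‖ ‖(liftMap K F Z).2‖ := by
    rw [hFW1, hFW2, norm_mul, norm_mul, norm_pow, mul_max_of_nonneg _ _ (by positivity)]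
  have hFZ0 : liftMap K F Z ≠ 0 := liftMap_ne_zero hns hZ
  have hFW0 : liftMap K F W ≠ 0 := liftMap_ne_zero hns hW0
  have hNFZ0 : 0 < max ‖(liftMap K F Z).1‖ ‖(liftMap K F Z).2‖ := nrm_pos hFZ0
  have hNFW0 : 0 < max ‖(liftMap K F W).1‖ ‖(liftMap K F W).2‖ := nrm_pos hFW0
  have hsn0 : ‖s‖ ≠ 0 := norm_ne_zero_iff.mpr hs0
  have hinv : Real.log (max ‖(liftMap K F W).1‖ ‖(liftMap K F W).2‖)
      - (d : ℝ) * Real.log (max ‖W.1‖ ‖W.2‖)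
      = Real.log (max ‖(liftMap K F Z).1‖ ‖(liftMap K F Z).2‖)
      - (d : ℝ) * Real.log t := by
    rw [hNFW, hNW, Real.log_mul (pow_ne_zero _ hsn0) (ne_of_gt hNFZ0),
      Real.log_mul hsn0 (ne_of_gt ht0), Real.log_pow]
    ring
  rw [ht, ← hinv]
  -- now bound at W
  have hW1le : ‖W.1‖ ≤ 1 := le_trans (le_max_left _ _) hWhigh
  have hW2le : ‖W.2‖ ≤ 1 := le_trans (le_max_right _ _) hWhigh
  -- upper bound on norm of F(W)
  have hupper : max ‖(liftMap K F W).1‖ ‖(liftMap K F W).2‖ ≤ CF := by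
    refine max_le ?_ ?_
    · refine le_trans (pairEval_le F.1 W hW1le hW2le) ?_
      rw [hCF]
      have := le_max_left (∑ t ∈ F.1.support, ‖F.1.coeff t‖)
        (∑ t ∈ F.2.support, ‖F.2.coeff t‖)
      linarith
    · refine le_trans (pairEval_le F.2 W hW1le hW2le) ?_
      rw [hCF]
      have := le_max_right (∑ t ∈ F.1.support, ‖F.1.coeff t‖)
        (∑ t ∈ F.2.support, ‖F.2.coeff t‖)
      linarith
  -- lower bound on norm of F(W)
  have hlower : ε ≤ max ‖(liftMap K F W).1‖ ‖(liftMap K F W).2‖ := by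
    set NFW := max ‖(liftMap K F W).1‖ ‖(liftMap K F W).2‖ with hNFWdef
    have key : ∀ (i : Fin 2) (a b : MvPolynomial (Fin 2) K) (m : ℕ),
        a * F.1 + b * F.2 = X i ^ m →
        ‖(if i = 0 then W.1 else W.2)‖ ^ m ≤
          ((∑ t ∈ a.support, ‖a.coeff t‖) + (∑ t ∈ b.support, ‖b.coeff t‖) + 1) * NFW := by
      intro i a b m hab
      have heval : pairEval K a W * pairEval K F.1 W + pairEval K b W * pairEval K F.2 W
          = (if i = 0 then W.1 else W.2) ^ m := by
        have := congrArg (fun P => pairEval K P W) hab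
        simpa [pairEval, map_add, map_mul, map_pow, MvPolynomial.eval_X] using this
      have hbnd : ‖(if i = 0 then W.1 else W.2)‖ ^ m
          ≤ ‖pairEval K a W‖ * ‖pairEval K F.1 W‖ + ‖pairEval K b W‖ * ‖pairEval K F.2 W‖ := by
        rw [← norm_pow, ← heval]
        exact (norm_add_le _ _).trans (by rw [norm_mul, norm_mul])
      refine hbnd.trans ?_
      have hf1 : ‖pairEval K F.1 W‖ ≤ NFW := le_max_left _ _
      have hf2 : ‖pairEval K F.2 W‖ ≤ NFW := le_max_right _ _
      have ha' : ‖pairEval K a W‖ ≤ ∑ t ∈ a.support, ‖a.coeff t‖ := pairEval_le a W hW1le hW2le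
      have hb' : ‖pairEval K b W‖ ≤ ∑ t ∈ b.support, ‖b.coeff t‖ := pairEval_le b W hW1le hW2le
      have hNFWpos : 0 < NFW := hNFW0
      calc ‖pairEval K a W‖ * ‖pairEval K F.1 W‖ + ‖pairEval K b W‖ * ‖pairEval K F.2 W‖
          ≤ (∑ t ∈ a.support, ‖a.coeff t‖) * NFW + (∑ t ∈ b.support, ‖b.coeff t‖) * NFW := by
            gcongr
        _ ≤ ((∑ t ∈ a.support, ‖a.coeff t‖) + (∑ t ∈ b.support, ‖b.coeff t‖) + 1) * NFW := by
            nlinarith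
    rcases le_max_iff.mp hWlow with hwl | hwl
    · have := key 0 a0 b0 m0 hab0
      simp only [if_pos rfl] at this
      have hr' : r ^ m0 ≤ D0 * NFW := le_trans (pow_le_pow_left₀ (le_of_lt hr0) hwl m0) (by
        rw [hD0]; exact this)
      have : r ^ m0 / D0 ≤ NFW := (div_le_iff₀' hD00).mpr hr'
      exact le_trans (min_le_left _ _) this
    · have := key 1 a1 b1 m1 hab1
      simp only [show (1 : Fin 2) ≠ 0 by decide, if_neg] at this
      have hr' : r ^ m1 ≤ D1 * NFW := le_trans (pow_le_pow_left₀ (le_of_lt hr0) hwl m1) (by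
        rw [hD1]; exact this)
      have : r ^ m1 / D1 ≤ NFW := (div_le_iff₀' hD10).mpr hr'
      exact le_trans (min_le_right _ _) this
  -- conclude
  have hlogNW_le : Real.log (max ‖W.1‖ ‖W.2‖) ≤ 0 :=
    Real.log_nonpos (le_of_lt (nrm_pos hW0)) hWhigh
  have hlogNW_ge : Real.log r ≤ Real.log (max ‖W.1‖ ‖W.2‖) :=
    Real.log_le_log hr0 hWlow
  have hup : Real.log (max ‖(liftMap K F W).1‖ ‖(liftMap K F W).2‖)
      - (d : ℝ) * Real.log (max ‖W.1‖ ‖W.2‖) ≤ Real.log CF - (d : ℝ) * Real.log r := by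
    have l1 : Real.log (max ‖(liftMap K F W).1‖ ‖(liftMap K F W).2‖) ≤ Real.log CF :=
      Real.log_le_log hNFW0 hupper
    have l2 : (d : ℝ) * Real.log r ≤ (d : ℝ) * Real.log (max ‖W.1‖ ‖W.2‖) :=
      mul_le_mul_of_nonneg_left hlogNW_ge (Nat.cast_nonneg d)
    linarith
  have hlo : Real.log ε ≤ Real.log (max ‖(liftMap K F W).1‖ ‖(liftMap K F W).2‖)
      - (d : ℝ) * Real.log (max ‖W.1‖ ‖W.2‖) := by
    have l1 : Real.log ε ≤ Real.log (max ‖(liftMap K F W).1‖ ‖(liftMap K F W).2‖) :=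
      Real.log_le_log hε0 hlower
    have l2 : (d : ℝ) * Real.log (max ‖W.1‖ ‖W.2‖) ≤ 0 :=
      mul_nonpos_of_nonneg_of_nonpos (Nat.cast_nonneg d) hlogNW_le
    linarith
  rw [abs_le]
  constructor
  · have : -(max (Real.log CF - (d : ℝ) * Real.log r) (-Real.log ε)) ≤ Real.log ε := by
      have := le_max_right (Real.log CF - (d : ℝ) * Real.log r) (-Real.log ε)
      linarith
    linarith
  · exact le_trans hup (le_max_left _ _)

end GreenAux

/-- For a non-degenerate homogeneous lift `F` of a rational function `f` of degree `d > 1`,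
the functions `Z ↦ d⁻ⁿ (log ‖Fⁿ(Z)‖ - dⁿ log ‖Z‖)` converge uniformly on `K² \ {0}`
(the limit is the dynamical Green function of `F`). -/
theorem green_function_uniform_convergence (f : RatFunc K) (d : ℕ) (hd : 1 < d)
    (hdeg : rdeg K f = d)
    (F : MvPolynomial (Fin 2) K × MvPolynomial (Fin 2) K) (hF : IsLift K f d F) :
    ∃ G : K × K → ℝ,
      TendstoUniformlyOn
        (fun (n : ℕ) (Z : K × K) =>
          ((d : ℝ) ^ n)⁻¹ *
            (Real.log (max ‖((liftMap K F)^[n] Z).1‖ ‖((liftMap K F)^[n] Z).2‖) -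
              (d : ℝ) ^ n * Real.log (max ‖Z.1‖ ‖Z.2‖)))
        G atTop {Z : K × K | Z ≠ 0} := by
  obtain ⟨h1, h2, hns, -⟩ := hF
  obtain ⟨M, hM⟩ := green_bound F d h1 h2 hns
  have hdR : (1 : ℝ) < (d : ℝ) := by exact_mod_cast hd
  have hdpos : (0 : ℝ) < (d : ℝ) := lt_trans one_pos hdR
  have hdne : (d : ℝ) ≠ 0 := ne_of_gt hdpos
  set g : ℕ → (K × K) → ℝ := fun n Z =>
    ((d : ℝ) ^ (n + 1))⁻¹ *
      (Real.log (max ‖(liftMap K F ((liftMap K F)^[n] Z)).1‖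
          ‖(liftMap K F ((liftMap K F)^[n] Z)).2‖)
        - (d : ℝ) * Real.log (max ‖((liftMap K F)^[n] Z).1‖ ‖((liftMap K F)^[n] Z).2‖))
    with hgdef
  have hsum : Summable (fun n : ℕ => M * (d : ℝ)⁻¹ * ((d : ℝ)⁻¹) ^ n) :=
    (summable_geometric_of_lt_one (by positivity) (inv_lt_one_of_one_lt₀ hdR)).mul_left _
  have hbound : ∀ (n : ℕ) (Z : K × K), Z ∈ {Z : K × K | Z ≠ 0} →
      ‖g n Z‖ ≤ M * (d : ℝ)⁻¹ * ((d : ℝ)⁻¹) ^ n := by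
    intro n Z hZ
    have hiter : (liftMap K F)^[n] Z ≠ 0 := iter_ne_zero hns hZ n
    have hMn := hM _ hiter
    have hpowpos : (0 : ℝ) < (d : ℝ) ^ (n + 1) := pow_pos hdpos _
    rw [hgdef]
    simp only []
    rw [Real.norm_eq_abs, abs_mul, abs_inv, abs_pow, abs_of_pos hdpos]
    calc ((d : ℝ) ^ (n + 1))⁻¹ *
        |Real.log (max ‖(liftMap K F ((liftMap K F)^[n] Z)).1‖
            ‖(liftMap K F ((liftMap K F)^[n] Z)).2‖)
          - (d : ℝ) * Real.log (max ‖((liftMap K F)^[n] Z).1‖ ‖((liftMap K F)^[n] Z).2‖)|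
        ≤ ((d : ℝ) ^ (n + 1))⁻¹ * M :=
          mul_le_mul_of_nonneg_left hMn (le_of_lt (inv_pos.mpr hpowpos))
      _ = M * (d : ℝ)⁻¹ * ((d : ℝ)⁻¹) ^ n := by
          rw [pow_succ, mul_inv, ← inv_pow]
          ring
  have huc := tendstoUniformlyOn_tsum_nat hsum hbound
  refine ⟨fun Z => ∑' n, g n Z, ?_⟩
  apply huc.congr
  refine Eventually.of_forall fun n => ?_
  induction n with
  | zero =>
    intro Z hZ
    simp [pow_zero]
  | succ n ih =>
    intro Z hZ
    have hih : (∑ k ∈ Finset.range n, g k Z) = ((d : ℝ) ^ n)⁻¹ *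
        (Real.log (max ‖((liftMap K F)^[n] Z).1‖ ‖((liftMap K F)^[n] Z).2‖)
          - (d : ℝ) ^ n * Real.log (max ‖Z.1‖ ‖Z.2‖)) := ih hZ
    show (∑ k ∈ Finset.range (n + 1), g k Z) = _
    rw [Finset.sum_range_succ, hih]
    simp only [hgdef, Function.iterate_succ_apply']
    set A1 : ℝ := Real.log (max ‖(liftMap K F ((liftMap K F)^[n] Z)).1‖
      ‖(liftMap K F ((liftMap K F)^[n] Z)).2‖)
    set A0 : ℝ := Real.log (max ‖((liftMap K F)^[n] Z).1‖ ‖((liftMap K F)^[n] Z).2‖)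
    set L : ℝ := Real.log (max ‖Z.1‖ ‖Z.2‖)
    have hpne : ((d : ℝ) ^ n) ≠ 0 := pow_ne_zero _ hdne
    field_simp
    ring
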